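/- Let T₁, …, T_m be independent random variables with P{T_i ≤ t} = exp(−2a_i/(γt)), a_i > 0, γ > 0, and let T = max_i T_i. Then conditionally on the event {T = T_i}, T has the same distribution as unconditionally: P{T ≤ t | T = T_i} = exp(−2a/(γt)) where a = Σ_k a_k. -/

import Mathlib

open MeasureTheory ProbabilityTheory Real Set



lemma hasDerivAt_aux {c γ : ℝ} (hγ : 0 < γ) {x : ℝ} (hx : x ≠ 0) :
    HasDerivAt (fun y => Real.exp (-(2*c)/(γ*y))) (2*c/(γ*x^2) * Real.exp (-(2*c)/(γ*x))) x := by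
  have h1 : HasDerivAt (fun y : ℝ => -(2*c)/(γ*y)) (2*c/(γ*x^2)) x := by
    have h2 : HasDerivAt (fun y : ℝ => (-(2*c)/γ) * y⁻¹) ((-(2*c)/γ) * (-(x^2)⁻¹)) x :=
      (hasDerivAt_inv hx).const_mul _
    have h3 : (fun y : ℝ => (-(2*c)/γ) * y⁻¹) = fun y : ℝ => -(2*c)/(γ*y) := by
      funext y; field_simp
    have h4 : (-(2*c)/γ) * (-(x^2)⁻¹) = 2*c/(γ*x^2) := by
      field_simp
    rw [h3, h4] at h2; exact h2
  simpa [mul_comm] using h1.exp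

lemma key_integral {c γ : ℝ} (hc : 0 < c) (hγ : 0 < γ) {t : ℝ} (ht : 0 < t) :
    ∫⁻ x in Set.Ioc 0 t, ENNReal.ofReal (2*c/(γ*x^2) * Real.exp (-(2*c)/(γ*x)))
      = ENNReal.ofReal (Real.exp (-(2*c)/(γ*t))) := by
  set g : ℝ → ℝ := fun x => 2*c/(γ*x^2) * Real.exp (-(2*c)/(γ*x)) with hg
  have hgm : Measurable g := by
    apply Measurable.mul
    · exact (measurable_const.div ((measurable_const.mul (measurable_id.pow_const 2))))
    · exact (measurable_const.div (measurable_const.mul measurable_id)).exp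
  set ρ : Measure ℝ := volume.withDensity (fun x => ENNReal.ofReal (g x)) with hρ
  have hρ_apply : ∀ s : Set ℝ, MeasurableSet s → ρ s = ∫⁻ x in s, ENNReal.ofReal (g x) := by
    intro s hs; rw [hρ, withDensity_apply _ hs]
  -- integral on Ioc ε t
  have hstep : ∀ ε : ℝ, 0 < ε → ε ≤ t →
      ρ (Set.Ioc ε t) = ENNReal.ofReal (Real.exp (-(2*c)/(γ*t)) - Real.exp (-(2*c)/(γ*ε))) := by
    intro ε hε hεt
    have hcont : ContinuousOn g (Set.uIcc ε t) := by
      have hsub : Set.uIcc ε t ⊆ {x : ℝ | x ≠ 0} := by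
        rw [Set.uIcc_of_le hεt]
        intro x hx
        exact (lt_of_lt_of_le hε hx.1).ne'
      apply ContinuousOn.mul
      · apply ContinuousOn.div continuousOn_const
        · fun_prop
        · intro x hx
          have hx0 : x ≠ 0 := hsub hx
          exact mul_ne_zero hγ.ne' (pow_ne_zero 2 hx0)
      · apply Real.continuous_exp.comp_continuousOn
        apply ContinuousOn.div continuousOn_const
        · fun_prop
        · intro x hx
          have hx0 := hsub hx
          simp only [Set.mem_setOf_eq] at hx0
          exact mul_ne_zero hγ.ne' hx0
    have hint : IntervalIntegrable g volume ε t := hcont.intervalIntegrable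
    have hftc : ∫ x in ε..t, g x
        = Real.exp (-(2*c)/(γ*t)) - Real.exp (-(2*c)/(γ*ε)) := by
      apply intervalIntegral.integral_eq_sub_of_hasDerivAt
      · intro x hx
        rw [Set.uIcc_of_le hεt] at hx
        exact hasDerivAt_aux hγ (lt_of_lt_of_le hε hx.1).ne'
      · exact hint
    rw [hρ_apply _ measurableSet_Ioc, ← hftc,
      intervalIntegral.integral_of_le hεt]
    rw [← ofReal_integral_eq_lintegral_ofReal]
    · exact hint.1
    · filter_upwards [ae_restrict_mem measurableSet_Ioc] with x hx
      have hx0 : 0 < x := lt_trans hε hx.1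
      have : 0 ≤ g x := by
        apply mul_nonneg _ (Real.exp_nonneg _)
        positivity
      exact this
  have hunion : Set.Ioc (0:ℝ) t = ⋃ n : ℕ, Set.Ioc (t/(n+1)) t := by
    ext x
    simp only [Set.mem_iUnion, Set.mem_Ioc]
    constructor
    · rintro ⟨hx0, hxt⟩
      obtain ⟨n, hn⟩ := exists_nat_gt (t/x)
      refine ⟨n, ?_, hxt⟩
      rw [div_lt_iff₀ (by positivity)]
      rw [div_lt_iff₀ hx0] at hn
      nlinarith
    · rintro ⟨n, hn, hxt⟩
      exact ⟨lt_of_le_of_lt (by positivity) hn, hxt⟩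
  have hmono : Monotone (fun n : ℕ => Set.Ioc (t/(n+1)) t) := by
    intro n m hnm
    apply Set.Ioc_subset_Ioc_left
    apply div_le_div_of_nonneg_left ht.le (by positivity)
    have : (n:ℝ) ≤ m := Nat.cast_le.mpr hnm
    linarith
  have htend : Filter.Tendsto (fun n : ℕ => ρ (Set.Ioc (t/(n+1)) t)) Filter.atTop
      (nhds (ρ (⋃ n : ℕ, Set.Ioc (t/(n+1)) t))) := tendsto_measure_iUnion_atTop hmono
  have hεpos : ∀ n : ℕ, 0 < t/((n:ℝ)+1) := fun n => by positivity
  have hεle : ∀ n : ℕ, t/((n:ℝ)+1) ≤ t := fun n => by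
    apply div_le_self ht.le
    have : (0:ℝ) ≤ n := Nat.cast_nonneg n
    linarith
  have hval : ∀ n : ℕ, ρ (Set.Ioc (t/(n+1)) t)
      = ENNReal.ofReal (Real.exp (-(2*c)/(γ*t)) - Real.exp (-(2*c)/(γ*(t/(n+1))))) :=
    fun n => hstep _ (hεpos n) (hεle n)
  have hreal : Filter.Tendsto (fun n : ℕ => Real.exp (-(2*c)/(γ*(t/(n+1))))) Filter.atTop
      (nhds 0) := by
    have heq : ∀ n : ℕ, -(2*c)/(γ*(t/(n+1))) = (-(2*c)/(γ*t))*((n:ℝ)+1) := by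
      intro n
      have h1 : ((n:ℝ)+1) ≠ 0 := by positivity
      field_simp
    simp only [heq]
    apply Real.tendsto_exp_atBot.comp
    apply Filter.Tendsto.const_mul_atTop_of_neg
    · apply div_neg_of_neg_of_pos (by linarith : -(2*c) < 0) (by positivity)
    · apply Filter.tendsto_atTop_add_const_right
      exact tendsto_natCast_atTop_atTop
  have htend2 : Filter.Tendsto (fun n : ℕ => ρ (Set.Ioc (t/(n+1)) t)) Filter.atTop
      (nhds (ENNReal.ofReal (Real.exp (-(2*c)/(γ*t))))) := by
    simp only [hval]
    have h2 : Filter.Tendsto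
        (fun n : ℕ => Real.exp (-(2*c)/(γ*t)) - Real.exp (-(2*c)/(γ*(t/(n+1)))))
        Filter.atTop (nhds (Real.exp (-(2*c)/(γ*t)) - 0)) :=
      tendsto_const_nhds.sub hreal
    have h3 := (ENNReal.continuous_ofReal.tendsto _).comp h2
    simpa [Function.comp_def] using h3
  rw [← hρ_apply _ measurableSet_Ioc, hunion]
  exact tendsto_nhds_unique htend htend2

lemma sup'_attach_aux {ι : Type*} {s : Finset ι} (h : s.Nonempty) (f : ι → ℝ) :
    s.attach.sup' (Finset.attach_nonempty_iff.mpr h) (fun k => f k) = s.sup' h f := by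
  apply le_antisymm
  · exact Finset.sup'_le _ _ fun k _ => Finset.le_sup' f k.2
  · exact Finset.sup'_le _ _ fun k hk => Finset.le_sup' (fun j : {x // x ∈ s} => f j)
      (Finset.mem_attach s ⟨k, hk⟩)

lemma law_eq_withDensity {c γ : ℝ} (hc : 0 < c) (hγ : 0 < γ) (ν : Measure ℝ)
    [IsFiniteMeasure ν] (h0 : ν (Set.Iic 0) = 0)
    (hcdf : ∀ s : ℝ, 0 < s → ν (Set.Iic s) = ENNReal.ofReal (Real.exp (-(2*c)/(γ*s)))) :
    ν = volume.withDensity ((Set.Ioi (0:ℝ)).indicator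
      (fun x => ENNReal.ofReal (2*c/(γ*x^2) * Real.exp (-(2*c)/(γ*x))))) := by
  apply MeasureTheory.Measure.ext_of_Iic
  intro s
  rw [withDensity_apply _ measurableSet_Iic]
  rw [lintegral_indicator measurableSet_Ioi, Measure.restrict_restrict measurableSet_Ioi]
  rcases le_or_gt s 0 with hs | hs
  · have he : Set.Ioi (0:ℝ) ∩ Set.Iic s = ∅ := by
      ext x; simp only [Set.mem_inter_iff, Set.mem_Ioi, Set.mem_Iic, Set.mem_empty_iff_false,
        iff_false, not_and, not_le]
      intro hx; linarith
    rw [he]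
    simp only [Measure.restrict_empty, lintegral_zero_measure]
    exact le_antisymm (h0 ▸ measure_mono (Set.Iic_subset_Iic.mpr hs)) (by simp)
  · have he : Set.Ioi (0:ℝ) ∩ Set.Iic s = Set.Ioc 0 s := by
      ext x; simp [Set.mem_Ioc, and_comm]
    rw [he, key_integral hc hγ hs, hcdf s hs]


/-- Conditionally on the maximum being attained at index `i`, the maximum `T = max_k T_k`
has its unconditional distribution:
`P({T ≤ t} ∩ {T = T_i}) = (a_i/a) · exp(-2a/(γt))` with `a = Σ_k a_k`. -/
theorem stmt_12 {Ω : Type*} [MeasurableSpace Ω] (μ : Measure Ω) [IsProbabilityMeasure μ]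
    (m : ℕ) (hm : 0 < m) (T : Fin m → Ω → ℝ) (hTm : ∀ i, Measurable (T i))
    (hTpos : ∀ i ω, 0 < T i ω)
    (hindep : iIndepFun T μ)
    (a : Fin m → ℝ) (ha : ∀ i, 0 < a i) (γ : ℝ) (hγ : 0 < γ)
    (hcdf : ∀ i, ∀ t : ℝ, 0 < t →
      μ {ω | T i ω ≤ t} = ENNReal.ofReal (Real.exp (-(2 * a i) / (γ * t))))
    (hdistinct : ∀ᵐ ω ∂μ, ∀ i j : Fin m, i ≠ j → T i ω ≠ T j ω) :
    ∀ i : Fin m, ∀ t : ℝ, 0 < t →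
      μ ({ω | ∀ k, T k ω ≤ t} ∩ {ω | ∀ k, T k ω ≤ T i ω})
        = ENNReal.ofReal ((a i / ∑ k, a k) * Real.exp (-(2 * ∑ k, a k) / (γ * t))) := by
  classical
  intro i t ht
  set A := ∑ k, a k with hA
  have hApos : 0 < A := Finset.sum_pos (fun k _ => ha k) ⟨i, Finset.mem_univ i⟩
  by_cases hne : (Finset.univ.erase i).Nonempty
  swap
  · -- degenerate case: i is the only index
    have hki : ∀ k : Fin m, k = i := by
      intro k
      by_contra h
      exact hne ⟨k, Finset.mem_erase.mpr ⟨h, Finset.mem_univ k⟩⟩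
    have hseteq : ({ω | ∀ k, T k ω ≤ t} ∩ {ω | ∀ k, T k ω ≤ T i ω}) = {ω | T i ω ≤ t} := by
      ext ω
      simp only [Set.mem_inter_iff, Set.mem_setOf_eq]
      constructor
      · rintro ⟨h1, _⟩; exact h1 i
      · intro h
        exact ⟨fun k => (hki k) ▸ h, fun k => (hki k) ▸ le_refl _⟩
    have hAi : A = a i := by
      rw [hA, ← Finset.add_sum_erase _ _ (Finset.mem_univ i),
        Finset.not_nonempty_iff_eq_empty.mp hne, Finset.sum_empty, add_zero]
    rw [hseteq, hcdf i t ht, hAi, div_self (ha i).ne', one_mul]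
  -- main case
  set b := ∑ k ∈ Finset.univ.erase i, a k with hb
  have hbpos : 0 < b := Finset.sum_pos (fun k _ => ha k) hne
  have hab : a i + b = A := Finset.add_sum_erase _ _ (Finset.mem_univ i)
  set M : Ω → ℝ := fun ω => (Finset.univ.erase i).sup' hne (fun k => T k ω) with hM
  have hMm : Measurable M := by
    rw [hM]
    have h := Finset.measurable_sup' hne (fun k (_ : k ∈ Finset.univ.erase i) => hTm k)
    have heq : (Finset.univ.erase i).sup' hne T
        = fun ω => (Finset.univ.erase i).sup' hne fun k => T k ω :=
      funext fun ω => Finset.sup'_apply hne T ω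
    rwa [heq] at h
  have hset : ({ω | ∀ k, T k ω ≤ t} ∩ {ω | ∀ k, T k ω ≤ T i ω})
      = (fun ω => (T i ω, M ω)) ⁻¹' {p : ℝ × ℝ | p.1 ≤ t ∧ p.2 ≤ p.1} := by
    ext ω
    simp only [Set.mem_inter_iff, Set.mem_setOf_eq, Set.mem_preimage]
    constructor
    · rintro ⟨h1, h2⟩
      exact ⟨h1 i, Finset.sup'_le _ _ fun k _ => h2 k⟩
    · rintro ⟨h1, h2⟩
      have h3 : ∀ k, T k ω ≤ T i ω := by
        intro k
        rcases eq_or_ne k i with rfl | hki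
        · exact le_refl _
        · exact le_trans (Finset.le_sup' (fun j => T j ω)
            (Finset.mem_erase.mpr ⟨hki, Finset.mem_univ k⟩)) h2
      exact ⟨fun k => le_trans (h3 k) h1, h3⟩
  have hTiM : IndepFun (T i) M μ := by
    have hbase := hindep.indepFun_finset {i} (Finset.univ.erase i)
      (Finset.disjoint_singleton_left.mpr (Finset.notMem_erase i _)) hTm
    have hne' : (Finset.univ.erase i).attach.Nonempty := Finset.attach_nonempty_iff.mpr hne
    have hcomp := hbase.comp (_mγ := inferInstance) (_mγ' := inferInstance)
      (φ := fun v : (({i} : Finset (Fin m)) : Type _) → ℝ => v ⟨i, Finset.mem_singleton_self i⟩)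
      (ψ := fun v : ((Finset.univ.erase i : Finset (Fin m)) : Type _) → ℝ =>
        (Finset.univ.erase i).attach.sup' hne' (fun k => v k))
      (measurable_pi_apply _)
      (by
        have h := Finset.measurable_sup' (f := fun (k : { x // x ∈ Finset.univ.erase i })
          (v : ((Finset.univ.erase i : Finset (Fin m)) : Type _) → ℝ) => v k) hne'
          (fun k _ => measurable_pi_apply k)
        have heq : (Finset.univ.erase i).attach.sup'
            (hne') (fun (k : { x // x ∈ Finset.univ.erase i })
              (v : ((Finset.univ.erase i : Finset (Fin m)) : Type _) → ℝ) => v k)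
            = fun v : ((Finset.univ.erase i : Finset (Fin m)) : Type _) → ℝ =>
              (Finset.univ.erase i).attach.sup' hne' (fun k => v k) :=
          funext fun v => Finset.sup'_apply hne' _ v
        rwa [heq] at h)
    have hl : (fun v : (({i} : Finset (Fin m)) : Type _) → ℝ =>
        v ⟨i, Finset.mem_singleton_self i⟩) ∘ (fun ω (k : ({i} : Finset (Fin m))) => T k ω)
        = T i := rfl
    have hr : (fun v : ((Finset.univ.erase i : Finset (Fin m)) : Type _) → ℝ =>
        (Finset.univ.erase i).attach.sup' hne' (fun k => v k)) ∘
        (fun ω (k : (Finset.univ.erase i : Finset (Fin m))) => T k ω) = M := by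
      funext ω
      exact sup'_attach_aux hne (fun k => T k ω)
    rwa [hl, hr] at hcomp
  have hS : MeasurableSet {p : ℝ × ℝ | p.1 ≤ t ∧ p.2 ≤ p.1} :=
    (measurableSet_le measurable_fst measurable_const).inter
      (measurableSet_le measurable_snd measurable_fst)
  have hmap : μ.map (fun ω => (T i ω, M ω)) = (μ.map (T i)).prod (μ.map M) :=
    (indepFun_iff_map_prod_eq_prod_map_map (hTm i).aemeasurable hMm.aemeasurable).mp hTiM
  rw [hset, ← Measure.map_apply ((hTm i).prodMk hMm) hS, hmap, Measure.prod_apply hS]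
  set ν := μ.map (T i) with hν
  set ρ := μ.map M with hρ
  haveI : IsProbabilityMeasure ν := Measure.isProbabilityMeasure_map (hTm i).aemeasurable
  have hν0 : ν (Set.Iic 0) = 0 := by
    rw [hν, Measure.map_apply (hTm i) measurableSet_Iic]
    have : T i ⁻¹' Set.Iic 0 = ∅ := by
      ext ω; simp only [Set.mem_preimage, Set.mem_Iic, Set.mem_empty_iff_false, iff_false, not_le]
      exact hTpos i ω
    rw [this, measure_empty]
  have hνIic : ∀ s : ℝ, 0 < s → ν (Set.Iic s) = ENNReal.ofReal (Real.exp (-(2*(a i))/(γ*s))) := by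
    intro s hs
    rw [hν, Measure.map_apply (hTm i) measurableSet_Iic]
    have : T i ⁻¹' Set.Iic s = {ω | T i ω ≤ s} := rfl
    rw [this, hcdf i s hs]
  have hρIic : ∀ x : ℝ, 0 < x → ρ (Set.Iic x) = ENNReal.ofReal (Real.exp (-(2*b)/(γ*x))) := by
    intro x hx
    rw [hρ, Measure.map_apply hMm measurableSet_Iic]
    have hMpre : M ⁻¹' Set.Iic x = ⋂ k ∈ Finset.univ.erase i, T k ⁻¹' Set.Iic x := by
      ext ω
      simp only [Set.mem_preimage, Set.mem_Iic, Set.mem_iInter, hM, Finset.sup'_le_iff]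
    rw [hMpre, hindep.measure_inter_preimage_eq_mul _ (fun k _ => measurableSet_Iic)]
    have hterm : ∀ k ∈ Finset.univ.erase i, μ (T k ⁻¹' Set.Iic x)
        = ENNReal.ofReal (Real.exp (-(2 * a k)/(γ*x))) := fun k _ => hcdf k x hx
    rw [Finset.prod_congr rfl hterm, ← ENNReal.ofReal_prod_of_nonneg
      (fun k _ => Real.exp_nonneg _), ← Real.exp_sum]
    congr 2
    have hterms : ∀ k ∈ Finset.univ.erase i, -(2 * a k)/(γ*x) = a k * (-2/(γ*x)) :=
      fun k _ => by ring
    rw [Finset.sum_congr rfl hterms, ← Finset.sum_mul, ← hb]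
    ring
  have hνd := law_eq_withDensity (ha i) hγ ν hν0 hνIic
  have hpre : ∫⁻ x, ρ (Prod.mk x ⁻¹' {p : ℝ × ℝ | p.1 ≤ t ∧ p.2 ≤ p.1}) ∂ν
      = ∫⁻ x in Set.Iic t, ρ (Set.Iic x) ∂ν := by
    rw [← lintegral_indicator measurableSet_Iic]
    apply lintegral_congr
    intro x
    by_cases hx : x ≤ t
    · have h1 : Prod.mk x ⁻¹' {p : ℝ × ℝ | p.1 ≤ t ∧ p.2 ≤ p.1} = Set.Iic x := by
        ext y; simp [hx]
      rw [h1, Set.indicator_of_mem (Set.mem_Iic.mpr hx)]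
    · have h1 : Prod.mk x ⁻¹' {p : ℝ × ℝ | p.1 ≤ t ∧ p.2 ≤ p.1} = ∅ := by
        ext y; simp [hx]
      rw [h1, measure_empty, Set.indicator_of_notMem (by simpa using hx)]
  rw [hpre, show Set.Iic t = Set.Iic 0 ∪ Set.Ioc 0 t from (Set.Iic_union_Ioc_eq_Iic ht.le).symm,
    lintegral_union measurableSet_Ioc (Set.Iic_disjoint_Ioc le_rfl),
    setLIntegral_measure_zero _ _ hν0, zero_add]
  rw [setLIntegral_congr_fun measurableSet_Ioc
    (fun x hx => hρIic x hx.1 :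
      Set.EqOn (fun x => ρ (Set.Iic x)) (fun x => ENNReal.ofReal (Real.exp (-(2*b)/(γ*x))))
        (Set.Ioc (0:ℝ) t))]
  have hfm : Measurable ((Set.Ioi (0:ℝ)).indicator
      (fun x => ENNReal.ofReal (2*(a i)/(γ*x^2) * Real.exp (-(2*(a i))/(γ*x))))) := by
    apply Measurable.indicator _ measurableSet_Ioi
    apply ENNReal.measurable_ofReal.comp
    exact ((measurable_const.div (measurable_const.mul (measurable_id.pow_const 2))).mul
      ((measurable_const.div (measurable_const.mul measurable_id)).exp))
  have hgm2 : Measurable (fun x : ℝ => ENNReal.ofReal (Real.exp (-(2*b)/(γ*x)))) :=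
    ENNReal.measurable_ofReal.comp ((measurable_const.div (measurable_const.mul measurable_id)).exp)
  rw [hνd, restrict_withDensity measurableSet_Ioc,
    lintegral_withDensity_eq_lintegral_mul _ hfm hgm2]
  have hpt : ∀ x ∈ Set.Ioc (0:ℝ) t,
      ((Set.Ioi (0:ℝ)).indicator
        (fun x => ENNReal.ofReal (2*(a i)/(γ*x^2) * Real.exp (-(2*(a i))/(γ*x)))) *
        fun x => ENNReal.ofReal (Real.exp (-(2*b)/(γ*x)))) x
      = ENNReal.ofReal (a i / A) * ENNReal.ofReal (2*A/(γ*x^2) * Real.exp (-(2*A)/(γ*x))) := by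
    intro x hx
    have hx0 : 0 < x := hx.1
    simp only [Pi.mul_apply, Set.indicator_of_mem (Set.mem_Ioi.mpr hx0)]
    have h1 : (0:ℝ) ≤ 2*(a i)/(γ*x^2) * Real.exp (-(2*(a i))/(γ*x)) :=
      mul_nonneg (div_nonneg (by linarith [ha i]) (by positivity)) (Real.exp_nonneg _)
    have h2 : (0:ℝ) ≤ a i / A := div_nonneg (ha i).le hApos.le
    rw [← ENNReal.ofReal_mul h1, ← ENNReal.ofReal_mul h2]
    congr 1
    have hexp : Real.exp (-(2*(a i))/(γ*x)) * Real.exp (-(2*b)/(γ*x))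
        = Real.exp (-(2*A)/(γ*x)) := by
      rw [← Real.exp_add]
      congr 1
      rw [← hab]
      ring
    rw [mul_assoc, hexp, ← mul_assoc]
    congr 1
    field_simp
  rw [setLIntegral_congr_fun measurableSet_Ioc hpt,
    lintegral_const_mul _ (by
      apply ENNReal.measurable_ofReal.comp
      exact ((measurable_const.div (measurable_const.mul (measurable_id.pow_const 2))).mul
        ((measurable_const.div (measurable_const.mul measurable_id)).exp))),
    key_integral hApos hγ ht,
    ← ENNReal.ofReal_mul (div_nonneg (ha i).le hApos.le)]
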